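/- Let X and Y be sober Noetherian topological spaces of finite dimension whose topologies are catenary, and let f : X → Y be a continuous map. If for every pair of irreducible closed subsets T ⊆ T′ of X with codim(T, T′) = 1 one has codim(cl(f(T)), cl(f(T′))) ≤ 1, then f is catenarious, i.e. codim(T, T″) ≥ codim(cl(f(T)), cl(f(T″))) for all irreducible closed subsets T ⊆ T″ of X. -/

import Mathlib

open TopologicalSpace

section TopDefs

variable {α β : Type*} [TopologicalSpace α] [TopologicalSpace β]

/-- The closure of a point, as an irreducible closed subset. -/
noncomputable def ptIC (x : α) : IrreducibleCloseds α :=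
  ⟨closure {x}, isIrreducible_singleton.closure, isClosed_closure⟩

/-- `codim(T, T')`: the supremum of lengths `n` of chains
`T = T₀ ⊊ T₁ ⊊ ⋯ ⊊ Tₙ ⊆ T'` of irreducible closed subsets. -/
noncomputable def icCodim (T T' : IrreducibleCloseds α) : ℕ∞ :=
  Set.chainHeight {Z : IrreducibleCloseds α | T < Z ∧ Z ≤ T'} (· < ·)

/-- The codimension of an irreducible closed subset in the whole space. -/
noncomputable def spCodim (T : IrreducibleCloseds α) : ℕ∞ :=
  Set.chainHeight {Z : IrreducibleCloseds α | T < Z} (· < ·)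

/-- The closure of the image of an irreducible closed subset under a continuous map,
as an irreducible closed subset. -/
noncomputable def imageIC (f : α → β) (hf : Continuous f) (T : IrreducibleCloseds α) :
    IrreducibleCloseds β :=
  ⟨closure (f '' (T : Set α)),
    (T.isIrreducible.image f hf.continuousOn).closure, isClosed_closure⟩

/-- `p` is a maximal chain of irreducible closed subsets starting with `T` and
ending with `T'`: no further irreducible closed subset can be inserted. -/
def IsMaxChainBtw (T T' : IrreducibleCloseds α) (p : LTSeries (IrreducibleCloseds α)) : Prop :=
  p.head = T ∧ p.last = T' ∧
    ∀ i : Fin p.length, ∀ Z : IrreducibleCloseds α,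
      ¬ (p.toFun i.castSucc < Z ∧ Z < p.toFun i.succ)

/-- A topological space is catenary if for all irreducible closed subsets `T ⊆ T'`,
every maximal chain of irreducible closed subsets starting with `T` and ending with `T'`
has the same length. -/
def CatenarySpace (α : Type*) [TopologicalSpace α] : Prop :=
  ∀ T T' : IrreducibleCloseds α, T ≤ T' →
    ∀ p q : LTSeries (IrreducibleCloseds α),
      IsMaxChainBtw T T' p → IsMaxChainBtw T T' q → p.length = q.length

/-- A continuous map is catenarious if
`codim(T, T') ≥ codim(cl(f(T)), cl(f(T')))` for all irreducible closed `T ⊆ T'`. -/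
def Catenarious (f : α → β) (hf : Continuous f) : Prop :=
  ∀ T T' : IrreducibleCloseds α, T ≤ T' →
    icCodim (imageIC f hf T) (imageIC f hf T') ≤ icCodim T T'

/-- `T'` is an irreducible component of the subset `s`:
a maximal irreducible subset of `s`. -/
def IsIrredComponentOf (T' s : Set α) : Prop :=
  T' ⊆ s ∧ IsIrreducible T' ∧ ∀ W : Set α, IsIrreducible W → T' ⊆ W → W ⊆ s → W = T'

/-- A continuous map `f` is weakly catenarious if for every point `y`, every irreducible
component `T'` of `f ⁻¹ y`, and every irreducible closed `T ⊆ cl(T')` with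
`codim(T, cl(T')) = 1`, one has `codim(cl(f(T)), cl(f(T'))) ≤ 1`. -/
def WeaklyCatenarious (f : α → β) (hf : Continuous f) : Prop :=
  ∀ y : β, ∀ T' : Set α, ∀ h : IsIrredComponentOf T' (f ⁻¹' {y}),
    ∀ T : IrreducibleCloseds α, (T : Set α) ⊆ closure T' →
      icCodim T ⟨closure T', h.2.1.closure, isClosed_closure⟩ = 1 →
      icCodim (imageIC f hf T)
        ⟨closure (f '' T'), (h.2.1.image f hf.continuousOn).closure, isClosed_closure⟩ ≤ 1

/-- A space is biequidimensional if all maximal chains of irreducible closed subsets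
have the same length. -/
def BiequidimensionalSpace (α : Type*) [TopologicalSpace α] : Prop :=
  ∀ p q : LTSeries (IrreducibleCloseds α),
    (IsMin p.head ∧ IsMax p.last ∧ ∀ i : Fin p.length, ∀ Z : IrreducibleCloseds α,
      ¬ (p.toFun i.castSucc < Z ∧ Z < p.toFun i.succ)) →
    (IsMin q.head ∧ IsMax q.last ∧ ∀ i : Fin q.length, ∀ Z : IrreducibleCloseds α,
      ¬ (q.toFun i.castSucc < Z ∧ Z < q.toFun i.succ)) →
    p.length = q.length

/-- `x` is a generic point of (an irreducible component of) the fiber `f ⁻¹ y`: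
it lies in the fiber and admits no strict generalization inside the fiber. -/
def IsFiberGeneric (f : α → β) (y : β) (x : α) : Prop :=
  f x = y ∧ ∀ z : α, f z = y → x ∈ closure {z} → z ∈ closure {x}

end TopDefs

/-- A morphism of schemes is flat if for every point the induced map of local rings
(stalks) is flat. -/
def SchemeHomFlat {X Y : AlgebraicGeometry.Scheme} (f : X ⟶ Y) : Prop :=
  ∀ x : X, RingHom.Flat (f.stalkMap x).hom


section Aux

variable {P : Type*} [PartialOrder P]

def Set.subchain {Q : Type*} [LT Q] (s : Set Q) : Set (List Q) :=
  {l | l.IsChain (· < ·) ∧ ∀ x ∈ l, x ∈ s}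

theorem Set.singleton_mem_subchain_iff {Q : Type*} [LT Q] {s : Set Q} {a : Q} :
    [a] ∈ s.subchain ↔ a ∈ s := by
  simp [Set.subchain]

private lemma list_encard_isChain {Q : Type*} [Preorder Q] :
    ∀ l : List Q, l.Pairwise (· < ·) →
      ({x | x ∈ l} : Set Q).encard = l.length ∧ IsChain (· < ·) {x | x ∈ l}
  | [], _ => by simp
  | a :: l, h => by
    obtain ⟨ha, hl⟩ := List.pairwise_cons.mp h
    obtain ⟨ih1, ih2⟩ := list_encard_isChain l hl
    have he : ({x | x ∈ a :: l} : Set Q) = insert a {x | x ∈ l} := by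
      ext; simp
    have hna : a ∉ ({x | x ∈ l} : Set Q) := fun hm => lt_irrefl a (ha a hm)
    rw [he]
    refine ⟨?_, ?_⟩
    · rw [Set.encard_insert_of_notMem hna, ih1]; simp
    · exact ih2.insert fun b hb _ => Or.inl (ha b hb)

theorem Set.length_le_chainHeight_of_mem_subchain {Q : Type*} [Preorder Q] {s : Set Q}
    {l : List Q} (hl : l ∈ s.subchain) : (l.length : ℕ∞) ≤ s.chainHeight (· < ·) := by
  obtain ⟨h1, h2⟩ := list_encard_isChain l (List.isChain_iff_pairwise.mp hl.1)
  rw [← h1]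
  exact Set.encard_le_chainHeight_of_isChain _ _ (fun x hx => hl.2 x hx) h2

private lemma exists_list_of_isChain {Q : Type*} [Preorder Q] :
    ∀ n : ℕ, ∀ t : Set Q, t.encard = n → IsChain (· < ·) t →
      ∃ l : List Q, l.IsChain (· < ·) ∧ (∀ x ∈ l, x ∈ t) ∧ l.length = n
  | 0, t, _, _ => ⟨[], by simp⟩
  | n + 1, t, ht, hc => by
    have hfin : t.Finite := Set.finite_of_encard_eq_coe ht
    have hne : t.Nonempty := by
      rw [Set.nonempty_iff_ne_empty]; rintro rfl
      simp only [Set.encard_empty] at ht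
      exact absurd ht.symm (by exact_mod_cast Nat.succ_ne_zero n)
    obtain ⟨m, hm⟩ := hfin.exists_minimal hne
    have ht' : (t \ {m}).encard = n := by
      rw [Set.encard_sdiff_singleton_of_mem hm.1, ht]
      norm_cast
    obtain ⟨l, hl1, hl2, hl3⟩ :=
      exists_list_of_isChain n (t \ {m}) ht' (hc.mono Set.sdiff_subset)
    have hlt : ∀ y ∈ l, m < y := by
      intro y hy
      have hy' := hl2 y hy
      rcases hc hm.1 hy'.1 (fun h => hy'.2 h.symm) with h | h
      · exact h
      · exact absurd (hm.2 hy'.1 h.le) (not_le_of_gt h)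
    refine ⟨m :: l, hl1.cons fun y hy => hlt y (List.mem_of_mem_head? hy), ?_, by simp [hl3]⟩
    intro x hx
    rcases List.mem_cons.mp hx with rfl | hx
    · exact hm.1
    · exact (hl2 x hx).1

theorem Set.exists_chain_of_le_chainHeight {Q : Type*} [Preorder Q] {s : Set Q} {n : ℕ}
    (hn : (n : ℕ∞) ≤ s.chainHeight (· < ·)) : ∃ l ∈ s.subchain, l.length = n := by
  obtain ⟨t, hts, hte, htc⟩ := Set.exists_isChain_of_le_chainHeight n hn
  obtain ⟨l, hl1, hl2, hl3⟩ := exists_list_of_isChain n t hte htc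
  exact ⟨l, ⟨hl1, fun x hx => hts (hl2 x hx)⟩, hl3⟩

private def codSet (a b : P) : Set P := {z : P | a < z ∧ z ≤ b}

private lemma icCodim_def {γ : Type*} [TopologicalSpace γ] (a b : IrreducibleCloseds γ) :
    icCodim a b = (codSet a b).chainHeight (· < ·) := rfl

private lemma codSet_self (a : P) : codSet a a = ∅ := by
  ext z
  simp only [codSet, Set.mem_setOf_eq, Set.mem_empty_iff_false, iff_false, not_and]
  intro h1 h2
  exact absurd (h1.trans_le h2) (lt_irrefl a)

private lemma one_le_cod {a b : P} (h : a < b) : 1 ≤ (codSet a b).chainHeight (· < ·) := by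
  have hm : [b] ∈ (codSet a b).subchain :=
    Set.singleton_mem_subchain_iff.mpr ⟨h, le_refl b⟩
  simpa using Set.length_le_chainHeight_of_mem_subchain hm

private lemma eq_of_cod_zero {a b : P} (hab : a ≤ b) (h : (codSet a b).chainHeight (· < ·) = 0) :
    a = b := by
  by_contra hne
  have h1 := one_le_cod (lt_of_le_of_ne hab hne)
  rw [h] at h1
  simp at h1

private lemma no_mid_of_cod_le_one {a b : P} (h : (codSet a b).chainHeight (· < ·) ≤ 1) :
    ∀ z : P, ¬ (a < z ∧ z < b) := by
  rintro z ⟨h1, h2⟩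
  have hmem : [z, b] ∈ (codSet a b).subchain := by
    constructor
    · exact List.isChain_pair.mpr h2
    · intro x hx
      rcases List.mem_cons.mp hx with rfl | hx
      · exact ⟨h1, h2.le⟩
      · rcases List.mem_singleton.mp hx with rfl
        exact ⟨h1.trans h2, le_refl _⟩
  have h3 := Set.length_le_chainHeight_of_mem_subchain hmem
  have h4 : ((2 : ℕ) : ℕ∞) ≤ 1 := le_trans (by exact_mod_cast h3) h
  simp at h4

private lemma cod_decompose {a b : P} {n : ℕ}
    (h : (codSet a b).chainHeight (· < ·) = (n + 1 : ℕ)) :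
    ∃ c : P, a < c ∧ c ≤ b ∧ (codSet a c).chainHeight (· < ·) = 1 ∧
      (codSet c b).chainHeight (· < ·) = (n : ℕ) := by
  obtain ⟨l, hl, hlen⟩ := Set.exists_chain_of_le_chainHeight (s := codSet a b)
    (n := n + 1) h.ge
  obtain ⟨c, t, rfl⟩ : ∃ c t, l = c :: t := by
    cases l with
    | nil => simp at hlen
    | cons c t => exact ⟨c, t, rfl⟩
  have htlen : t.length = n := by simpa using hlen
  have hc : c ∈ codSet a b := hl.2 c (List.mem_cons_self)
  refine ⟨c, hc.1, hc.2, ?_, ?_⟩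
  · refine le_antisymm ?_ (one_le_cod hc.1)
    by_contra hlt
    push_neg at hlt
    have h2 : ((2 : ℕ) : ℕ∞) ≤ (codSet a c).chainHeight (· < ·) := by
      have := Order.add_one_le_of_lt hlt
      exact_mod_cast this
    obtain ⟨l2, hl2, hlen2⟩ := Set.exists_chain_of_le_chainHeight (s := codSet a c) h2
    obtain ⟨w1, w2, rfl⟩ := List.length_eq_two.mp hlen2
    have hw1 : w1 ∈ codSet a c := hl2.2 _ (by simp)
    have hw2 : w2 ∈ codSet a c := hl2.2 _ (by simp)
    have hw12 : w1 < w2 := List.isChain_pair.mp hl2.1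
    have hmem : (w1 :: c :: t) ∈ (codSet a b).subchain := by
      constructor
      · exact List.IsChain.cons_cons (hw12.trans_le hw2.2) hl.1
      · intro x hx
        rcases List.mem_cons.mp hx with rfl | hx
        · exact ⟨hw1.1, hw1.2.trans hc.2⟩
        · exact hl.2 x hx
    have h3 := Set.length_le_chainHeight_of_mem_subchain hmem
    rw [h] at h3
    have h4 : (w1 :: c :: t).length ≤ n + 1 := by exact_mod_cast h3
    simp [htlen] at h4
  · refine le_antisymm ?_ ?_
    · by_contra hlt
      push_neg at hlt
      have h2 : ((n + 1 : ℕ) : ℕ∞) ≤ (codSet c b).chainHeight (· < ·) := by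
        have := Order.add_one_le_of_lt hlt
        exact_mod_cast this
      obtain ⟨l3, hl3, hlen3⟩ := Set.exists_chain_of_le_chainHeight (s := codSet c b) h2
      have hmem : (c :: l3) ∈ (codSet a b).subchain := by
        refine ⟨List.isChain_cons.mpr ⟨?_, hl3.1⟩, ?_⟩
        · intro y hy
          have : y ∈ codSet c b := hl3.2 y (List.mem_of_mem_head? hy)
          exact this.1
        · intro x hx
          rcases List.mem_cons.mp hx with rfl | hx
          · exact hc
          · have := hl3.2 x hx
            exact ⟨hc.1.trans this.1, this.2⟩
      have h3 := Set.length_le_chainHeight_of_mem_subchain hmem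
      rw [h] at h3
      have h4 : (c :: l3).length ≤ n + 1 := by exact_mod_cast h3
      simp [hlen3] at h4
    · have htt : t ∈ (codSet c b).subchain := by
        refine ⟨(List.isChain_cons.mp hl.1).2, ?_⟩
        intro x hx
        refine ⟨?_, (hl.2 x (List.mem_cons_of_mem c hx)).2⟩
        have hp : List.Pairwise (· < ·) (c :: t) := List.isChain_iff_pairwise.mp hl.1
        exact (List.pairwise_cons.mp hp).1 x hx
      have h3 := Set.length_le_chainHeight_of_mem_subchain htt
      rw [htlen] at h3
      exact h3

private def pairLT {a b : P} (h : a < b) : LTSeries P where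
  length := 1
  toFun := fun i => if i.1 = 0 then a else b
  step := fun i => by
    fin_cases i
    simpa using h

private lemma pairLT_head {a b : P} (h : a < b) : (pairLT h).head = a := rfl

private lemma pairLT_last {a b : P} (h : a < b) : (pairLT h).last = b := rfl

private lemma pairLT_max {a b : P} (h : a < b) (hmid : ∀ z : P, ¬ (a < z ∧ z < b)) :
    ∀ i : Fin (pairLT h).length, ∀ z : P,
      ¬ ((pairLT h).toFun i.castSucc < z ∧ z < (pairLT h).toFun i.succ) := by
  intro i z hz
  fin_cases i
  exact hmid z (by simpa [pairLT] using hz)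

private lemma max_smash (p q : LTSeries P) (h : p.last = q.head)
    (hp : ∀ i : Fin p.length, ∀ z : P, ¬ (p.toFun i.castSucc < z ∧ z < p.toFun i.succ))
    (hq : ∀ i : Fin q.length, ∀ z : P, ¬ (q.toFun i.castSucc < z ∧ z < q.toFun i.succ)) :
    ∀ i : Fin (p.smash q h).length, ∀ z : P,
      ¬ ((p.smash q h).toFun i.castSucc < z ∧ z < (p.smash q h).toFun i.succ) := by
  intro i z hz
  have hilt : i.1 < p.length + q.length := i.2
  by_cases hi : i.1 < p.length
  · refine hp ⟨i.1, hi⟩ z ⟨?_, ?_⟩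
    · have e1 := RelSeries.smash_castAdd h (⟨i.1, hi⟩ : Fin p.length)
      have i1 : Fin.castSucc ((⟨i.1, hi⟩ : Fin p.length).castAdd q.length) = i.castSucc := by
        ext; rfl
      rw [i1] at e1
      rw [← e1]
      exact hz.1
    · have e2 := RelSeries.smash_succ_castAdd h (⟨i.1, hi⟩ : Fin p.length)
      have i2 : ((⟨i.1, hi⟩ : Fin p.length).castAdd q.length).succ = i.succ := by
        ext; rfl
      rw [i2] at e2
      rw [← e2]
      exact hz.2
  · have hi2 : i.1 - p.length < q.length := by omega
    refine hq ⟨i.1 - p.length, hi2⟩ z ⟨?_, ?_⟩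
    · have e1 := RelSeries.smash_natAdd h (⟨i.1 - p.length, hi2⟩ : Fin q.length)
      have i1 : Fin.castSucc ((⟨i.1 - p.length, hi2⟩ : Fin q.length).natAdd p.length)
          = i.castSucc := by
        ext
        simp only [Fin.coe_castSucc, Fin.coe_natAdd]
        omega
      rw [i1] at e1
      rw [← e1]
      exact hz.1
    · have e2 := RelSeries.smash_succ_natAdd h (⟨i.1 - p.length, hi2⟩ : Fin q.length)
      have i2 : ((⟨i.1 - p.length, hi2⟩ : Fin q.length).natAdd p.length).succ = i.succ := by
        ext
        simp only [Fin.val_succ, Fin.coe_natAdd]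
        omega
      rw [i2] at e2
      rw [← e2]
      exact hz.2

private lemma exists_maxchain (n : ℕ) : ∀ a b : P, a ≤ b →
    (codSet a b).chainHeight (· < ·) = (n : ℕ) →
    ∃ s : LTSeries P, s.head = a ∧ s.last = b ∧ s.length = n ∧
      ∀ i : Fin s.length, ∀ z : P, ¬ (s.toFun i.castSucc < z ∧ z < s.toFun i.succ) := by
  induction n with
  | zero =>
    intro a b hab h
    obtain rfl : a = b := eq_of_cod_zero hab (by exact_mod_cast h)
    refine ⟨RelSeries.singleton _ a, RelSeries.head_singleton a, RelSeries.last_singleton a,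
      rfl, fun i => i.elim0⟩
  | succ n ih =>
    intro a b hab h
    have hne : a ≠ b := by
      rintro rfl
      rw [codSet_self, Set.chainHeight_empty] at h
      exact absurd h.symm (by exact_mod_cast Nat.succ_ne_zero n)
    obtain ⟨c, hac, hcb, h1, hn⟩ := cod_decompose h
    obtain ⟨s, hh, hl, hlen, hmax⟩ := ih c b hcb hn
    have hconn : (pairLT hac).last = s.head := by rw [pairLT_last, hh]
    refine ⟨(pairLT hac).smash s hconn, ?_, ?_, ?_, ?_⟩
    · rw [RelSeries.head_smash]; exact pairLT_head hac
    · rw [RelSeries.last_smash]; exact hl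
    · show (pairLT hac).length + s.length = n + 1
      rw [hlen]
      show 1 + n = n + 1
      omega
    · exact max_smash _ _ hconn (pairLT_max hac (no_mid_of_cod_le_one (le_of_eq h1))) hmax

private lemma exists_length_bound {Q : Type*} [Preorder Q] (h : Order.krullDim Q ≠ ⊤) :
    ∃ N : ℕ, ∀ p : LTSeries Q, p.length ≤ N := by
  cases hk : Order.krullDim Q with
  | bot =>
    refine ⟨0, fun p => ?_⟩
    have hle := Order.LTSeries.length_le_krullDim p
    rw [hk] at hle
    simp at hle
  | coe m =>
    cases m with
    | top => exact absurd hk h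
    | coe n =>
      refine ⟨n, fun p => ?_⟩
      have hle := Order.LTSeries.length_le_krullDim p
      rw [hk] at hle
      exact_mod_cast hle

private lemma chainHeight_ne_top {Q : Type*} [Preorder Q] {N : ℕ}
    (hb : ∀ p : LTSeries Q, p.length ≤ N) (S : Set Q) : S.chainHeight (· < ·) ≠ ⊤ := by
  intro hS
  obtain ⟨l, hl, hlen⟩ := Set.exists_chain_of_le_chainHeight (s := S) (n := N + 2)
    (by rw [hS]; exact le_top)
  have hne : l ≠ [] := by intro h; rw [h] at hlen; simp at hlen
  have hle := hb (RelSeries.fromListIsChain l hne hl.1)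
  change l.length - 1 ≤ N at hle
  omega

private lemma imageIC_mono {α β : Type*} [TopologicalSpace α] [TopologicalSpace β]
    (f : α → β) (hf : Continuous f) {T T' : IrreducibleCloseds α} (h : T ≤ T') :
    imageIC f hf T ≤ imageIC f hf T' := by
  rw [← SetLike.coe_subset_coe]
  exact closure_mono (Set.image_mono (SetLike.coe_subset_coe.mpr h))

private lemma icCodim_le_add {β : Type*} [TopologicalSpace β] (hcβ : CatenarySpace β)
    {N : ℕ} (hb : ∀ p : LTSeries (IrreducibleCloseds β), p.length ≤ N)
    (a b c : IrreducibleCloseds β) (hab : a ≤ b) (hbc : b ≤ c) :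
    icCodim a c ≤ icCodim a b + icCodim b c := by
  obtain ⟨m, hm⟩ : ∃ m : ℕ, icCodim a c = (m : ℕ∞) := by
    cases hh : icCodim a c with
    | top => exact absurd hh (chainHeight_ne_top hb _)
    | coe m => exact ⟨m, rfl⟩
  obtain ⟨p, hp⟩ : ∃ p : ℕ, icCodim a b = (p : ℕ∞) := by
    cases hh : icCodim a b with
    | top => exact absurd hh (chainHeight_ne_top hb _)
    | coe p => exact ⟨p, rfl⟩
  obtain ⟨q, hq⟩ : ∃ q : ℕ, icCodim b c = (q : ℕ∞) := by
    cases hh : icCodim b c with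
    | top => exact absurd hh (chainHeight_ne_top hb _)
    | coe q => exact ⟨q, rfl⟩
  obtain ⟨s1, s1h, s1l, s1len, s1max⟩ := exists_maxchain m a c (hab.trans hbc) hm
  obtain ⟨s2, s2h, s2l, s2len, s2max⟩ := exists_maxchain p a b hab hp
  obtain ⟨s3, s3h, s3l, s3len, s3max⟩ := exists_maxchain q b c hbc hq
  have hconn : s2.last = s3.head := by rw [s2l, s3h]
  have key := hcβ a c (hab.trans hbc) s1 (s2.smash s3 hconn)
    ⟨s1h, s1l, s1max⟩
    ⟨by rw [RelSeries.head_smash]; exact s2h,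
     by rw [RelSeries.last_smash]; exact s3l,
     max_smash s2 s3 hconn s2max s3max⟩
  have hmpq : m = p + q := by
    rw [s1len] at key
    have : (s2.smash s3 hconn).length = s2.length + s3.length := rfl
    rw [this, s2len, s3len] at key
    exact key
  rw [hm, hp, hq, hmpq]
  push_cast
  exact le_refl _

end Aux

/-- For a continuous map between finite-dimensional sober Noetherian
catenary spaces, if the codimension of images of adjacent (codimension one) pairs of
irreducible closed subsets is at most one, then the map is catenarious. -/
theorem statement1 {α β : Type*} [TopologicalSpace α] [TopologicalSpace β]
    [QuasiSober α] [T0Space α] [QuasiSober β] [T0Space β]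
    [TopologicalSpace.NoetherianSpace α] [TopologicalSpace.NoetherianSpace β]
    (hdα : topologicalKrullDim α ≠ ⊤) (hdβ : topologicalKrullDim β ≠ ⊤)
    (hcα : CatenarySpace α) (hcβ : CatenarySpace β)
    (f : α → β) (hf : Continuous f)
    (h1 : ∀ T T' : IrreducibleCloseds α, T ≤ T' → icCodim T T' = 1 →
      icCodim (imageIC f hf T) (imageIC f hf T') ≤ 1) :
    Catenarious f hf := by
  obtain ⟨N, hN⟩ := exists_length_bound (Q := IrreducibleCloseds β) hdβ
  intro T T'' hle
  have key : ∀ n : ℕ, ∀ T T'' : IrreducibleCloseds α, T ≤ T'' → icCodim T T'' = (n : ℕ∞) →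
      icCodim (imageIC f hf T) (imageIC f hf T'') ≤ (n : ℕ∞) := by
    intro n
    induction n with
    | zero =>
      intro T T'' hle h
      obtain rfl : T = T'' := eq_of_cod_zero hle (by rw [← icCodim_def]; exact_mod_cast h)
      rw [icCodim_def, codSet_self, Set.chainHeight_empty]
      exact le_refl _
    | succ n ih =>
      intro T T'' hle h
      rw [icCodim_def] at h
      obtain ⟨C, hTC, hCT'', hone, hn⟩ := cod_decompose (by exact_mod_cast h)
      have step1 : icCodim (imageIC f hf T) (imageIC f hf C) ≤ 1 :=
        h1 T C hTC.le (by rw [icCodim_def]; exact hone)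
      have step2 : icCodim (imageIC f hf C) (imageIC f hf T'') ≤ (n : ℕ∞) :=
        ih C T'' hCT'' (by rw [icCodim_def]; exact hn)
      calc icCodim (imageIC f hf T) (imageIC f hf T'')
          ≤ icCodim (imageIC f hf T) (imageIC f hf C)
            + icCodim (imageIC f hf C) (imageIC f hf T'') :=
            icCodim_le_add hcβ hN _ _ _ (imageIC_mono f hf hTC.le) (imageIC_mono f hf hCT'')
        _ ≤ 1 + (n : ℕ∞) := add_le_add step1 step2
        _ = ((n + 1 : ℕ) : ℕ∞) := by push_cast; ring
  cases h : icCodim T T'' with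
  | top => exact le_top
  | coe n => exact key n T T'' hle h
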